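/- Let (p_n)_{n≥1} ⊆ [1,∞) and (σ_n)_{n≥1} ⊆ ℝ with inf_n σ_n < sup_n σ_n, and fix n̄ ≥ 2 such that {σ_1,…,σ_{n̄}} is not a singleton. Set A := ∪_{n≥1} ( Σ_{k=1}^n [0,p_k]·(1,σ_k) ) ⊆ ℝ². Then A ⊆ dom H_FD ⊆ cl A, and int(dom H_FD) = int A = ∪_{n≥n̄} Σ_{k=1}^n (0,p_k)·(1,σ_k). -/

import Mathlib

open Filter

/-- The Bose–Einstein entropy, with values in `ℝ ∪ {+∞}`. -/
noncomputable def EBEe (u : ℝ) : EReal :=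
  if 0 ≤ u then ((u * Real.log u - (1 + u) * Real.log (1 + u) : ℝ) : EReal) else ⊤

/-- The Maxwell–Boltzmann entropy, with values in `ℝ ∪ {+∞}`. -/
noncomputable def EMBe (u : ℝ) : EReal :=
  if 0 ≤ u then ((u * (Real.log u - 1) : ℝ) : EReal) else ⊤

/-- The Fermi–Dirac entropy, with values in `ℝ ∪ {+∞}`. -/
noncomputable def EFDe (u : ℝ) : EReal :=
  if 0 ≤ u ∧ u ≤ 1 then ((u * Real.log u + (1 - u) * Real.log (1 - u) : ℝ) : EReal) else ⊤

/-- The sum of a series in `ℝ ∪ {±∞}`, following the paper's convention: the limit of the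
partial sums when this limit exists in `[−∞,+∞]`, and `+∞` otherwise. -/
noncomputable def serSum (β : ℕ → EReal) : EReal :=
  @dite _ (∃ l : EReal, Tendsto (fun N => ∑ k ∈ Finset.range N, β k) atTop (nhds l))
    (Classical.dec _) (fun h => h.choose) (fun _ => ⊤)

/-- `S(u,v)`: the set of sequences of nonnegative reals with `Σ u_n = u` and `Σ σ_n u_n = v`
(sums as limits of partial sums). -/
def Sfeas (σ : ℕ → ℝ) (u v : ℝ) : Set (ℕ → ℝ) :=
  {w | (∀ n, 0 ≤ w n) ∧
    Tendsto (fun N => ∑ k ∈ Finset.range N, w k) atTop (nhds u) ∧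
    Tendsto (fun N => ∑ k ∈ Finset.range N, σ k * w k) atTop (nhds v)}

/-- The value (marginal) function `H_W(u,v) = inf { Σ p_n W(u_n/p_n) : (u_n) ∈ S(u,v) }`,
with `inf ∅ = +∞`. -/
noncomputable def Hval (p σ : ℕ → ℝ) (W : ℝ → EReal) (u v : ℝ) : EReal :=
  sInf ((fun w => serSum fun n => (p n : EReal) * W (w n / p n)) '' Sfeas σ u v)

/-- The convex set `A = ∪_n Σ_{k=1}^n [0,p_k]·(1,σ_k)`. -/
def Aset (p σ : ℕ → ℝ) : Set (ℝ × ℝ) :=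
  ⋃ n : ℕ, {z : ℝ × ℝ | ∃ t : Fin n → ℝ, (∀ k, 0 ≤ t k ∧ t k ≤ p k.1) ∧
    z = ∑ k, t k • ((1 : ℝ), σ k.1)}

lemma serSum_eq {β : ℕ → EReal} {l : EReal}
    (h : Tendsto (fun N => ∑ k ∈ Finset.range N, β k) atTop (nhds l)) : serSum β = l := by
  have hex : ∃ l' : EReal, Tendsto (fun N => ∑ k ∈ Finset.range N, β k) atTop (nhds l') := ⟨l, h⟩
  rw [serSum, dif_pos hex]
  exact tendsto_nhds_unique hex.choose_spec h
lemma EFDe_ne_bot (u : ℝ) : EFDe u ≠ ⊥ := by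
  unfold EFDe; split
  · exact EReal.coe_ne_bot _
  · simp
lemma EFDe_top {u : ℝ} (h : 1 < u) : EFDe u = ⊤ := by
  rw [EFDe, if_neg]; rintro ⟨-, h1⟩; linarith
lemma term_ne_bot (p : ℝ) (hp : 1 ≤ p) (u : ℝ) : (p : EReal) * EFDe u ≠ ⊥ := by
  unfold EFDe; split
  · rw [← EReal.coe_mul]; exact EReal.coe_ne_bot _
  · rw [EReal.coe_mul_top_of_pos (by linarith)]; simp
lemma sum_ne_bot {s : Finset ℕ} {f : ℕ → EReal} (h : ∀ k, f k ≠ ⊥) :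
    ∑ k ∈ s, f k ≠ ⊥ := by
  classical
  induction s using Finset.induction with
  | empty => simp
  | insert a s hk ih =>
    rw [Finset.sum_insert hk]
    simp only [ne_eq, EReal.add_eq_bot_iff]
    tauto
lemma sum_eq_top {s : Finset ℕ} {f : ℕ → EReal} (h : ∀ k, f k ≠ ⊥) {m : ℕ}
    (hm : m ∈ s) (htop : f m = ⊤) : ∑ k ∈ s, f k = ⊤ := by
  classical
  rw [← Finset.add_sum_erase _ _ hm, htop]
  exact EReal.top_add_of_ne_bot (sum_ne_bot h)
lemma pad_sum (σ : ℕ → ℝ) {n N : ℕ} (h : n ≤ N) (t : Fin n → ℝ) :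
    ∑ k : Fin N, (if hk : k.1 < n then t ⟨k.1, hk⟩ else 0) • ((1 : ℝ), σ k.1)
      = ∑ k : Fin n, t k • ((1 : ℝ), σ k.1) := by
  set g : ℕ → ℝ × ℝ := fun j => (if hk : j < n then t ⟨j, hk⟩ else 0) • ((1 : ℝ), σ j) with hg
  have h1 : ∀ k : Fin n, t k • ((1 : ℝ), σ k.1) = g k.1 := fun k => by
    simp [hg, k.isLt]
  rw [Finset.sum_congr rfl (fun k _ => h1 k), Fin.sum_univ_eq_sum_range g,
    Fin.sum_univ_eq_sum_range g, ← Finset.sum_subset (Finset.range_subset_range.mpr h)]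
  intro j _ hj
  rw [Finset.mem_range] at hj
  simp [hg, hj]
lemma tendsto_of_eventually_zero {w : ℕ → ℝ} {n : ℕ} (h : ∀ m, n ≤ m → w m = 0) :
    Tendsto (fun N => ∑ k ∈ Finset.range N, w k) atTop (nhds (∑ k ∈ Finset.range n, w k)) := by
  refine Tendsto.congr' ?_ tendsto_const_nhds
  filter_upwards [eventually_ge_atTop n] with N hN
  refine Finset.sum_subset (Finset.range_subset_range.mpr hN) fun j _ hj => ?_
  rw [Finset.mem_range] at hj
  exact h j (not_lt.mp hj)
lemma mem_dom (p σ : ℕ → ℝ) (hp : ∀ n, 1 ≤ p n) {n : ℕ} (t : Fin n → ℝ)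
    (ht : ∀ k, 0 ≤ t k ∧ t k ≤ p k.1) {z : ℝ × ℝ}
    (hz : z = ∑ k, t k • ((1 : ℝ), σ k.1)) : Hval p σ EFDe z.1 z.2 < ⊤ := by
  set w : ℕ → ℝ := fun m => if hm : m < n then t ⟨m, hm⟩ else 0 with hw
  have hw0 : ∀ m, 0 ≤ w m := by
    intro m; rw [hw]; dsimp only
    split
    · exact (ht _).1
    · exact le_refl _
  have hwz : ∀ m, n ≤ m → w m = 0 := by
    intro m hm; rw [hw]; simp [not_lt.mpr hm]
  have hwp : ∀ m, 0 ≤ w m / p m ∧ w m / p m ≤ 1 := by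
    intro m
    have hpm : (0 : ℝ) < p m := lt_of_lt_of_le one_pos (hp m)
    constructor
    · exact div_nonneg (hw0 m) hpm.le
    · rw [div_le_one hpm]
      rw [hw]; dsimp only
      split
      · exact (ht _).2
      · exact le_trans one_pos.le (hp m)
  -- the z components
  have hwk : ∀ k : Fin n, w k.1 = t k := fun k => by simp [hw, k.isLt]
  have hz1 : z.1 = ∑ k ∈ Finset.range n, w k := by
    rw [hz, Prod.fst_sum, ← Fin.sum_univ_eq_sum_range w n]
    refine Finset.sum_congr rfl fun k _ => ?_
    simp [hwk k]
  have hz2 : z.2 = ∑ k ∈ Finset.range n, σ k * w k := by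
    rw [hz, Prod.snd_sum, ← Fin.sum_univ_eq_sum_range (fun m => σ m * w m) n]
    refine Finset.sum_congr rfl fun k _ => ?_
    simp [hwk k, mul_comm]
  -- feasibility
  have hfeas : w ∈ Sfeas σ z.1 z.2 := by
    refine ⟨hw0, ?_, ?_⟩
    · rw [hz1]; exact tendsto_of_eventually_zero hwz
    · rw [hz2]
      exact tendsto_of_eventually_zero (fun m hm => by rw [hwz m hm, mul_zero])
  -- the entropy series is a finite real
  set r : ℕ → ℝ := fun m => p m * (w m / p m * Real.log (w m / p m)
      + (1 - w m / p m) * Real.log (1 - w m / p m)) with hr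
  have hterm : ∀ m, (p m : EReal) * EFDe (w m / p m) = ((r m : ℝ) : EReal) := by
    intro m
    rw [EFDe, if_pos ⟨(hwp m).1, (hwp m).2⟩, ← EReal.coe_mul]
  have hrz : ∀ m, n ≤ m → r m = 0 := by
    intro m hm
    rw [hr]; dsimp only
    rw [hwz m hm]
    simp
  have hser : serSum (fun m => (p m : EReal) * EFDe (w m / p m))
      = ((∑ k ∈ Finset.range n, r k : ℝ) : EReal) := by
    apply serSum_eq
    have : Tendsto (fun N => ∑ k ∈ Finset.range N, r k) atTop
        (nhds (∑ k ∈ Finset.range n, r k)) := tendsto_of_eventually_zero hrz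
    have h2 := (continuous_coe_real_ereal.tendsto _).comp this
    refine Tendsto.congr ?_ h2
    intro N
    simp only [Function.comp_apply]
    rw [show ((∑ k ∈ Finset.range N, r k : ℝ) : EReal) = ∑ k ∈ Finset.range N, ((r k : ℝ) : EReal)
      from map_sum (⟨⟨(fun x : ℝ => (x : EReal)), EReal.coe_zero⟩, fun a b => EReal.coe_add a b⟩ : ℝ →+ EReal) _ _]
    exact (Finset.sum_congr rfl fun k _ => (hterm k).symm)
  calc Hval p σ EFDe z.1 z.2 ≤ ((∑ k ∈ Finset.range n, r k : ℝ) : EReal) := by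
        rw [← hser]
        exact sInf_le ⟨w, hfeas, rfl⟩
    _ < ⊤ := EReal.coe_lt_top _
lemma dom_subset_closure (p σ : ℕ → ℝ) (hp : ∀ n, 1 ≤ p n) {z : ℝ × ℝ}
    (h : Hval p σ EFDe z.1 z.2 < ⊤) : z ∈ closure (Aset p σ) := by
  obtain ⟨b, ⟨w, hw, rfl⟩, hb⟩ := sInf_lt_iff.mp h
  set g : ℕ → EReal := fun m => (p m : EReal) * EFDe (w m / p m) with hg
  have hgne : ∀ m, g m ≠ ⊥ := fun m => term_ne_bot _ (hp m) _
  have hwle : ∀ m, w m ≤ p m := by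
    by_contra hc
    push_neg at hc
    obtain ⟨m, hm⟩ := hc
    have hpm : (0 : ℝ) < p m := lt_of_lt_of_le one_pos (hp m)
    have h1 : (1 : ℝ) < w m / p m := (one_lt_div hpm).mpr hm
    have hgm : g m = ⊤ := by
      rw [hg]; dsimp only
      rw [EFDe_top h1, EReal.coe_mul_top_of_pos (by linarith)]
    have hts : Tendsto (fun N => ∑ k ∈ Finset.range N, g k) atTop (nhds ⊤) := by
      refine Tendsto.congr' ?_ tendsto_const_nhds
      filter_upwards [eventually_gt_atTop m] with N hN
      exact (sum_eq_top hgne (Finset.mem_range.mpr hN) hgm).symm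
    simp only [← hg] at hb
    rw [serSum_eq hts] at hb
    exact absurd hb (lt_irrefl _)
  obtain ⟨hw0, hwu, hwv⟩ := hw
  have htz : Tendsto (fun N => ((∑ k ∈ Finset.range N, w k,
      ∑ k ∈ Finset.range N, σ k * w k) : ℝ × ℝ)) atTop (nhds z) := by
    have h2 := hwu.prodMk_nhds hwv
    simpa using h2
  refine mem_closure_of_tendsto htz (Eventually.of_forall fun N => ?_)
  refine Set.mem_iUnion.mpr ⟨N, ⟨fun k => w k.1, fun k => ⟨hw0 k.1, hwle k.1⟩, ?_⟩⟩
  refine Prod.ext ?_ ?_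
  · rw [Prod.fst_sum, ← Fin.sum_univ_eq_sum_range w N]
    simp
  · rw [Prod.snd_sum, ← Fin.sum_univ_eq_sum_range (fun m => σ m * w m) N]
    simp [mul_comm]
def Bn (p σ : ℕ → ℝ) (n : ℕ) : Set (ℝ × ℝ) :=
  {z : ℝ × ℝ | ∃ t : Fin n → ℝ, (∀ k, 0 < t k ∧ t k < p k.1) ∧
    z = ∑ k, t k • ((1 : ℝ), σ k.1)}
noncomputable def Lmap (σ : ℕ → ℝ) (n : ℕ) : (Fin n → ℝ) →ₗ[ℝ] ℝ × ℝ where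
  toFun t := ∑ k, t k • ((1 : ℝ), σ k.1)
  map_add' x y := by
    rw [← Finset.sum_add_distrib]
    exact Finset.sum_congr rfl fun k _ => by rw [Pi.add_apply, add_smul]
  map_smul' c x := by
    show (∑ k : Fin n, (c • x) k • ((1 : ℝ), σ k.1)) = c • ∑ k : Fin n, x k • ((1 : ℝ), σ k.1)
    rw [Finset.smul_sum]
    refine Finset.sum_congr rfl fun k _ => ?_
    rw [Pi.smul_apply, smul_smul, smul_eq_mul]
lemma Lmap_apply (σ : ℕ → ℝ) (n : ℕ) (t : Fin n → ℝ) :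
    Lmap σ n t = ∑ k, t k • ((1 : ℝ), σ k.1) := rfl
lemma Lmap_single (σ : ℕ → ℝ) (n : ℕ) (k : Fin n) (c : ℝ) :
    Lmap σ n (Pi.single k c) = c • ((1 : ℝ), σ k.1) := by
  rw [Lmap_apply, Finset.sum_eq_single k]
  · simp
  · intro k' _ hk'
    rw [Pi.single_eq_of_ne hk', zero_smul]
  · intro hk
    exact absurd (Finset.mem_univ k) hk
lemma Lmap_surj (σ : ℕ → ℝ) {i j n : ℕ} (hi : i < n) (hj : j < n) (hσ : σ i ≠ σ j) :
    Function.Surjective (Lmap σ n) := by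
  rintro ⟨a, b⟩
  have hd : σ j - σ i ≠ 0 := sub_ne_zero.mpr (Ne.symm hσ)
  refine ⟨Pi.single ⟨i, hi⟩ ((σ j * a - b) / (σ j - σ i))
    + Pi.single ⟨j, hj⟩ ((b - σ i * a) / (σ j - σ i)), ?_⟩
  rw [map_add, Lmap_single, Lmap_single]
  refine Prod.ext ?_ ?_
  · show (σ j * a - b) / (σ j - σ i) * 1 + (b - σ i * a) / (σ j - σ i) * 1 = a
    field_simp
    ring
  · show (σ j * a - b) / (σ j - σ i) * σ i + (b - σ i * a) / (σ j - σ i) * σ j = b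
    field_simp
    ring
lemma Bn_eq_image (p σ : ℕ → ℝ) (n : ℕ) :
    Bn p σ n = (Lmap σ n) '' (Set.univ.pi fun k => Set.Ioo 0 (p k.1)) := by
  ext z
  constructor
  · rintro ⟨t, ht, rfl⟩
    exact ⟨t, fun k _ => ht k, rfl⟩
  · rintro ⟨t, ht, rfl⟩
    exact ⟨t, fun k => ht k (Set.mem_univ k), rfl⟩
lemma Bn_isOpen (p σ : ℕ → ℝ) {n : ℕ} (hsurj : Function.Surjective (Lmap σ n)) :
    IsOpen (Bn p σ n) := by
  rw [Bn_eq_image]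
  have h1 : Function.Surjective (LinearMap.toContinuousLinearMap (Lmap σ n)) := by
    simpa using hsurj
  have h2 := ContinuousLinearMap.isOpenMap (LinearMap.toContinuousLinearMap (Lmap σ n)) h1
  have hopen : IsOpen ((Set.univ : Set (Fin n)).pi fun k => Set.Ioo 0 (p k.1)) :=
    isOpen_set_pi Set.finite_univ fun k _ => isOpen_Ioo
  have h3 := h2 _ hopen
  exact h3
lemma U_convex (p σ : ℕ → ℝ) (hp : ∀ n, 1 ≤ p n) (nbar : ℕ) :
    Convex ℝ (⋃ n ∈ Set.Ici nbar, Bn p σ n) := by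
  rintro x hx y hy a b ha hb hab
  rw [Set.mem_iUnion₂] at hx hy ⊢
  rcases eq_or_lt_of_le ha with ha0 | ha
  · have hb1 : b = 1 := by linarith
    rw [← ha0, hb1, zero_smul, one_smul, zero_add]
    exact hy
  rcases eq_or_lt_of_le hb with hb0 | hb
  · have ha1 : a = 1 := by linarith
    rw [← hb0, ha1, zero_smul, one_smul, add_zero]
    exact hx
  obtain ⟨n, hn, tx, htx, rfl⟩ := hx
  obtain ⟨m, hm, ty, hty, rfl⟩ := hy
  set N := max n m with hN
  set tx' : Fin N → ℝ := fun k => if h : k.1 < n then tx ⟨k.1, h⟩ else 0 with htx'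
  set ty' : Fin N → ℝ := fun k => if h : k.1 < m then ty ⟨k.1, h⟩ else 0 with hty'
  have hx' : (∑ k, tx k • ((1 : ℝ), σ k.1)) = ∑ k : Fin N, tx' k • ((1 : ℝ), σ k.1) :=
    (pad_sum σ (le_max_left n m) tx).symm
  have hy' : (∑ k, ty k • ((1 : ℝ), σ k.1)) = ∑ k : Fin N, ty' k • ((1 : ℝ), σ k.1) :=
    (pad_sum σ (le_max_right n m) ty).symm
  have htx'0 : ∀ k : Fin N, 0 ≤ tx' k := by
    intro k; rw [htx']; dsimp only; split
    · exact (htx _).1.le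
    · exact le_refl _
  have hty'0 : ∀ k : Fin N, 0 ≤ ty' k := by
    intro k; rw [hty']; dsimp only; split
    · exact (hty _).1.le
    · exact le_refl _
  have htx'p : ∀ k : Fin N, tx' k < p k.1 := by
    intro k; rw [htx']; dsimp only; split
    · exact (htx _).2
    · exact lt_of_lt_of_le one_pos (hp k.1)
  have hty'p : ∀ k : Fin N, ty' k < p k.1 := by
    intro k; rw [hty']; dsimp only; split
    · exact (hty _).2
    · exact lt_of_lt_of_le one_pos (hp k.1)
  refine ⟨N, le_trans hn (le_max_left n m), fun k => a * tx' k + b * ty' k, fun k => ⟨?_, ?_⟩, ?_⟩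
  · -- positivity
    show 0 < a * tx' k + b * ty' k
    have h2 : (k : ℕ) < n ⊔ m := k.isLt
    rcases lt_sup_iff.mp h2 with hk | hk
    · have h1 : 0 < tx' k := by rw [htx']; dsimp only; rw [dif_pos hk]; exact (htx _).1
      nlinarith [hty'0 k]
    · have h1 : 0 < ty' k := by rw [hty']; dsimp only; rw [dif_pos hk]; exact (hty _).1
      nlinarith [htx'0 k]
  · show a * tx' k + b * ty' k < p k.1
    have h1 : a * tx' k < a * p k.1 := mul_lt_mul_of_pos_left (htx'p k) ha
    have h2 : b * ty' k < b * p k.1 := mul_lt_mul_of_pos_left (hty'p k) hb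
    have h3 : a * p k.1 + b * p k.1 = p k.1 := by rw [← add_mul, hab, one_mul]
    linarith
  · rw [hx', hy', Finset.smul_sum, Finset.smul_sum, ← Finset.sum_add_distrib]
    refine Finset.sum_congr rfl fun k _ => ?_
    rw [smul_smul, smul_smul, ← add_smul]
lemma Aset_subset_closureU (p σ : ℕ → ℝ) (hp : ∀ n, 1 ≤ p n) (nbar : ℕ) :
    Aset p σ ⊆ closure (⋃ n ∈ Set.Ici nbar, Bn p σ n) := by
  intro z hz
  obtain ⟨n, t, ht, rfl⟩ := Set.mem_iUnion.mp hz
  set N := max n nbar with hN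
  set t' : Fin N → ℝ := fun k => if h : k.1 < n then t ⟨k.1, h⟩ else 0 with ht'
  have hz' : (∑ k, t k • ((1 : ℝ), σ k.1)) = ∑ k : Fin N, t' k • ((1 : ℝ), σ k.1) :=
    (pad_sum σ (le_max_left n nbar) t).symm
  have ht'0 : ∀ k : Fin N, 0 ≤ t' k := by
    intro k; rw [ht']; dsimp only; split
    · exact (ht _).1
    · exact le_refl _
  have ht'p : ∀ k : Fin N, t' k ≤ p k.1 := by
    intro k; rw [ht']; dsimp only; split
    · exact (ht _).2
    · exact le_trans one_pos.le (hp k.1)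
  set d : ℝ × ℝ := ∑ k : Fin N, (p k.1 / 2 - t' k) • ((1 : ℝ), σ k.1) with hd
  have hεpos : ∀ j : ℕ, (0 : ℝ) < 1 / (j + 1) := by
    intro j; positivity
  have hεle : ∀ j : ℕ, (1 : ℝ) / (j + 1) ≤ 1 := by
    intro j
    rw [div_le_one (by positivity)]
    have : (0 : ℝ) ≤ j := Nat.cast_nonneg j
    linarith
  have hfj : ∀ j : ℕ, ((∑ k, t k • ((1 : ℝ), σ k.1)) + (1 / (j + 1) : ℝ) • d)
      ∈ ⋃ n ∈ Set.Ici nbar, Bn p σ n := by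
    intro j
    set ε : ℝ := 1 / (j + 1) with hε
    rw [Set.mem_iUnion₂]
    refine ⟨N, le_max_right n nbar, fun k => t' k + ε * (p k.1 / 2 - t' k), fun k => ⟨?_, ?_⟩, ?_⟩
    · nlinarith [ht'0 k, ht'p k, hεpos j, hεle j, hp k.1]
    · nlinarith [ht'0 k, ht'p k, hεpos j, hεle j, hp k.1]
    · rw [hz', hd, Finset.smul_sum, ← Finset.sum_add_distrib]
      refine Finset.sum_congr rfl fun k _ => ?_
      rw [smul_smul, ← add_smul]
  have htend : Tendsto (fun j : ℕ => (∑ k, t k • ((1 : ℝ), σ k.1)) + (1 / (j + 1) : ℝ) • d)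
      atTop (nhds (∑ k, t k • ((1 : ℝ), σ k.1))) := by
    have h1 : Tendsto (fun j : ℕ => (1 : ℝ) / (j + 1)) atTop (nhds 0) :=
      tendsto_one_div_add_atTop_nhds_zero_nat
    have h2 := (h1.smul_const d).const_add (∑ k, t k • ((1 : ℝ), σ k.1))
    simpa using h2
  exact mem_closure_of_tendsto htend (Eventually.of_forall hfj)
lemma interior_closure_eq {U : Set (ℝ × ℝ)} (hconv : Convex ℝ U) (hopen : IsOpen U)
    (hne : U.Nonempty) : interior (closure U) = U := by
  apply subset_antisymm
  · intro x hx
    obtain ⟨y, hy⟩ := hne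
    by_cases hxy : x = y
    · rw [hxy]; exact hy
    obtain ⟨ε, hε, hball⟩ := Metric.mem_nhds_iff.mp (mem_interior_iff_mem_nhds.mp hx)
    have hnxy : (0 : ℝ) < ‖x - y‖ := by
      rw [norm_pos_iff, sub_ne_zero]
      exact hxy
    set δ : ℝ := ε / (2 * ‖x - y‖) with hδ
    have hδpos : 0 < δ := by positivity
    set z : ℝ × ℝ := x + δ • (x - y) with hz
    have hzball : z ∈ Metric.ball x ε := by
      rw [Metric.mem_ball, dist_eq_norm]
      have : z - x = δ • (x - y) := by rw [hz]; abel
      rw [this, norm_smul, Real.norm_eq_abs, abs_of_pos hδpos, hδ]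
      have h2 : ε / (2 * ‖x - y‖) * ‖x - y‖ = ε / 2 := by
        field_simp
      rw [h2]
      linarith
    have hzcl : z ∈ closure U := hball hzball
    have hyint : y ∈ interior U := by rw [hopen.interior_eq]; exact hy
    have hseg := hconv.openSegment_interior_closure_subset_interior hyint hzcl
    have h1δ : (1 : ℝ) + δ ≠ 0 := by positivity
    have hmem : x ∈ openSegment ℝ y z := by
      refine ⟨δ / (1 + δ), 1 / (1 + δ), by positivity, by positivity, ?_, ?_⟩
      · rw [← add_div, div_eq_one_iff_eq h1δ]
        ring
      · rw [hz]
        match_scalars <;> field_simp <;> ring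
    have := hseg hmem
    rw [hopen.interior_eq] at this
    exact this
  · exact interior_maximal subset_closure hopen

/-- `A ⊆ dom H_FD ⊆ cl A` and `int (dom H_FD) = int A = ∪_{n ≥ n̄} Σ_{k=1}^n (0,p_k)·(1,σ_k)`. -/
theorem stmt8 (p σ : ℕ → ℝ) (hp : ∀ n, 1 ≤ p n)
    (hlt : (⨅ n, ((σ n : ℝ) : EReal)) < ⨆ n, ((σ n : ℝ) : EReal))
    (nbar : ℕ) (hnbar : 2 ≤ nbar) (hns : ∃ i j : ℕ, i < nbar ∧ j < nbar ∧ σ i ≠ σ j) :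
    Aset p σ ⊆ {z : ℝ × ℝ | Hval p σ EFDe z.1 z.2 < ⊤} ∧
    {z : ℝ × ℝ | Hval p σ EFDe z.1 z.2 < ⊤} ⊆ closure (Aset p σ) ∧
    interior {z : ℝ × ℝ | Hval p σ EFDe z.1 z.2 < ⊤} = interior (Aset p σ) ∧
    interior (Aset p σ) =
      ⋃ n ∈ Set.Ici nbar, {z : ℝ × ℝ | ∃ t : Fin n → ℝ, (∀ k, 0 < t k ∧ t k < p k.1) ∧
        z = ∑ k, t k • ((1 : ℝ), σ k.1)} := by
  obtain ⟨i, j, hi, hj, hσ⟩ := hns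
  set U : Set (ℝ × ℝ) := ⋃ n ∈ Set.Ici nbar, Bn p σ n with hU
  have hUopen : IsOpen U := by
    refine isOpen_biUnion fun n hn => Bn_isOpen p σ (Lmap_surj σ ?_ ?_ hσ)
    · exact lt_of_lt_of_le hi hn
    · exact lt_of_lt_of_le hj hn
  have hUconv := U_convex p σ hp nbar
  have hUne : U.Nonempty := by
    refine ⟨∑ k : Fin nbar, (p k.1 / 2) • ((1 : ℝ), σ k.1), ?_⟩
    rw [hU, Set.mem_iUnion₂]
    exact ⟨nbar, Set.mem_Ici.mpr (le_refl _), fun k => p k.1 / 2,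
      fun k => ⟨by linarith [hp k.1], by linarith [hp k.1]⟩, rfl⟩
  have hUA : U ⊆ Aset p σ := by
    rintro z hz
    rw [hU, Set.mem_iUnion₂] at hz
    obtain ⟨n, _, t, ht, rfl⟩ := hz
    exact Set.mem_iUnion.mpr ⟨n, t, fun k => ⟨(ht k).1.le, (ht k).2.le⟩, rfl⟩
  have hAcl : Aset p σ ⊆ closure U := Aset_subset_closureU p σ hp nbar
  have hicl : interior (closure U) = U := interior_closure_eq hUconv hUopen hUne
  have hAdom : Aset p σ ⊆ {z : ℝ × ℝ | Hval p σ EFDe z.1 z.2 < ⊤} := by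
    intro z hz
    obtain ⟨n, t, ht, hzeq⟩ := Set.mem_iUnion.mp hz
    exact mem_dom p σ hp t ht hzeq
  have hdomcl : {z : ℝ × ℝ | Hval p σ EFDe z.1 z.2 < ⊤} ⊆ closure (Aset p σ) :=
    fun z hz => dom_subset_closure p σ hp hz
  have hintA : interior (Aset p σ) = U := by
    apply subset_antisymm
    · exact (interior_mono hAcl).trans (le_of_eq hicl)
    · exact interior_maximal hUA hUopen
  have hintD : interior {z : ℝ × ℝ | Hval p σ EFDe z.1 z.2 < ⊤} = U := by
    apply subset_antisymm
    · have h1 : closure (Aset p σ) ⊆ closure U := closure_minimal hAcl isClosed_closure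
      exact (interior_mono (hdomcl.trans h1)).trans (le_of_eq hicl)
    · exact interior_maximal (hUA.trans hAdom) hUopen
  exact ⟨hAdom, hdomcl, hintD.trans hintA.symm, hintA⟩
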